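/- arXiv:2206.06334 — 2 statements merged into one kernel-verified Lean document; each statement's English description precedes it below -/
import Mathlib

section
/- Let A be a real symmetric positive definite n×n matrix, X := {x ∈ ℝⁿ : Ax·x ≤ ℏ} and X^ℏ = {p ∈ ℝⁿ : A⁻¹p·p ≤ ℏ} its ℏ-polar dual. For every invertible linear map T : ℝ^{2n} → ℝ^{2n} and every z₀ ∈ ℝ^{2n} such that the ellipsoid z₀ + T(B^{2n}(√ℏ)) is contained in X × X^ℏ, one has |det T| ≤ 1; equivalently, the Lebesgue volume of any ellipsoid contained in X × X^ℏ is at most the volume of B^{2n}(√ℏ). (This volume is attained by the ellipsoid {(x,p) : Ax·x + A⁻¹p·p ≤ ℏ}, the image of B^{2n}(√ℏ) by the symplectic matrix [[A^{−1/2},0],[0,A^{1/2}]].) -/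
open Matrix Set

noncomputable section

section SqrtCompat

open scoped MatrixOrder

def Matrix.PosSemidef.sqrt {l : Type*} [Fintype l] [DecidableEq l] {A : Matrix l l ℝ}
    (_ : A.PosSemidef) : Matrix l l ℝ := CFC.sqrt A

lemma Matrix.PosSemidef.sqrt_mul_self {l : Type*} [Fintype l] [DecidableEq l] {A : Matrix l l ℝ}
    (hA : A.PosSemidef) : hA.sqrt * hA.sqrt = A := CFC.sqrt_mul_sqrt_self A hA.nonneg

lemma Matrix.PosSemidef.posSemidef_sqrt {l : Type*} [Fintype l] [DecidableEq l]
    {A : Matrix l l ℝ} (hA : A.PosSemidef) : hA.sqrt.PosSemidef :=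
  (CFC.sqrt_nonneg A).posSemidef

end SqrtCompat

namespace EllipsoidAux

variable {m l : Type*} [Fintype m] [Fintype l]

lemma dot_self_nonneg (v : m → ℝ) : 0 ≤ v ⬝ᵥ v :=
  Finset.sum_nonneg fun _ _ => mul_self_nonneg _

/-- row bound from operator norm ≤ 1 -/
lemma row_dot_le_one (C : Matrix m l ℝ)
    (h : ∀ w, C.mulVec w ⬝ᵥ C.mulVec w ≤ w ⬝ᵥ w) (k : m) :
    C k ⬝ᵥ C k ≤ 1 := by
  set u : l → ℝ := C k with hu
  set t : ℝ := u ⬝ᵥ u with ht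
  have ht0 : 0 ≤ t := dot_self_nonneg u
  have h1 : (C.mulVec u) k = t := rfl
  have h2 : t ^ 2 ≤ (C.mulVec u) ⬝ᵥ (C.mulVec u) := by
    rw [← h1]
    calc (C.mulVec u) k ^ 2 ≤ ∑ i, (C.mulVec u) i ^ 2 :=
          Finset.single_le_sum (f := fun i => (C.mulVec u) i ^ 2)
            (fun i _ => sq_nonneg _) (Finset.mem_univ k)
      _ = (C.mulVec u) ⬝ᵥ (C.mulVec u) := by simp [dotProduct, sq]
  have h3 := h u
  nlinarith

/-- scaling: a quadratic bound on the ball of radius √ℏ gives a global bound -/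
lemma quad_le_of_ball (A : Matrix m m ℝ) (R : Matrix m l ℝ) {ℏ : ℝ} (hℏ : 0 < ℏ)
    (h : ∀ w, w ⬝ᵥ w ≤ ℏ → A.mulVec (R.mulVec w) ⬝ᵥ R.mulVec w ≤ ℏ) :
    ∀ w, A.mulVec (R.mulVec w) ⬝ᵥ R.mulVec w ≤ w ⬝ᵥ w := by
  intro w
  rcases (dot_self_nonneg w).eq_or_lt with h0 | hpos
  · have hw : w = 0 := dotProduct_self_eq_zero.mp h0.symm
    simp [hw, ← h0]
  · set s : ℝ := w ⬝ᵥ w with hs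
    set c : ℝ := Real.sqrt (ℏ / s) with hc
    have hc2 : c ^ 2 = ℏ / s := Real.sq_sqrt (le_of_lt (div_pos hℏ hpos))
    have hball : (c • w) ⬝ᵥ (c • w) ≤ ℏ := by
      rw [smul_dotProduct, dotProduct_smul, smul_eq_mul, smul_eq_mul, ← mul_assoc, ← sq, hc2]
      rw [div_mul_cancel₀ _ (ne_of_gt hpos)]
    have := h (c • w) hball
    rw [mulVec_smul, mulVec_smul, smul_dotProduct, dotProduct_smul, smul_eq_mul, smul_eq_mul,
      ← mul_assoc, ← sq, hc2] at this
    have h4 : ℏ / s * (A.mulVec (R.mulVec w) ⬝ᵥ R.mulVec w) ≤ ℏ := this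
    calc A.mulVec (R.mulVec w) ⬝ᵥ R.mulVec w
        = (s / ℏ) * (ℏ / s * (A.mulVec (R.mulVec w) ⬝ᵥ R.mulVec w)) := by
          field_simp
      _ ≤ (s / ℏ) * ℏ := by
          exact mul_le_mul_of_nonneg_left h4 (le_of_lt (div_pos hpos hℏ))
      _ = s := by field_simp

/-- parallelogram trick -/
lemma quad_le_of_add_sub (A : Matrix m m ℝ) (a b : m → ℝ) {ℏ : ℝ}
    (h0 : 0 ≤ A.mulVec a ⬝ᵥ a)
    (h₁ : A.mulVec (a + b) ⬝ᵥ (a + b) ≤ ℏ)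
    (h₂ : A.mulVec (a - b) ⬝ᵥ (a - b) ≤ ℏ) :
    A.mulVec b ⬝ᵥ b ≤ ℏ := by
  have e1 : A.mulVec (a + b) ⬝ᵥ (a + b)
      = A.mulVec a ⬝ᵥ a + A.mulVec a ⬝ᵥ b + A.mulVec b ⬝ᵥ a + A.mulVec b ⬝ᵥ b := by
    simp [mulVec_add, add_dotProduct, dotProduct_add]; ring
  have e2 : A.mulVec (a - b) ⬝ᵥ (a - b)
      = A.mulVec a ⬝ᵥ a - A.mulVec a ⬝ᵥ b - A.mulVec b ⬝ᵥ a + A.mulVec b ⬝ᵥ b := by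
    simp [mulVec_sub, sub_dotProduct, dotProduct_sub]; ring
  linarith

/-- quadratic form via the square root -/
lemma sqrt_quad {A : Matrix l l ℝ} [DecidableEq l] (hA : A.PosSemidef) (v : l → ℝ) :
    hA.sqrt.mulVec v ⬝ᵥ hA.sqrt.mulVec v = A.mulVec v ⬝ᵥ v := by
  have hS : hA.sqrt * hA.sqrt = A := hA.sqrt_mul_self
  have hsym : hA.sqrtᵀ = hA.sqrt := by
    have := hA.posSemidef_sqrt.isHermitian
    simpa [Matrix.IsHermitian, conjTranspose_eq_transpose_of_trivial] using this
  calc hA.sqrt.mulVec v ⬝ᵥ hA.sqrt.mulVec v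
      = v ⬝ᵥ (hA.sqrtᵀ * hA.sqrt).mulVec v := by
        rw [← mulVec_mulVec, dotProduct_mulVec, ← mulVec_transpose, dotProduct_comm,
          dotProduct_mulVec, ← mulVec_transpose, dotProduct_comm, transpose_transpose]
    _ = A.mulVec v ⬝ᵥ v := by rw [hsym, hS, dotProduct_comm]

variable [DecidableEq m]

lemma trace_eq_sum_eigenvalues {M : Matrix m m ℝ} (hM : M.IsHermitian) :
    M.trace = ∑ i, hM.eigenvalues i := by
  conv_lhs => rw [hM.spectral_theorem, Unitary.conjStarAlgAut_apply]
  rw [trace_mul_cycle]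
  have h1 : (star (hM.eigenvectorUnitary : Matrix m m ℝ)) * (hM.eigenvectorUnitary : Matrix m m ℝ)
      = 1 := mem_unitaryGroup_iff'.mp (hM.eigenvectorUnitary).2
  rw [h1, one_mul, trace_diagonal]
  simp

lemma det_le_one_of_trace_le_card {M : Matrix m m ℝ} (hM : M.PosSemidef)
    (h : M.trace ≤ (Fintype.card m : ℝ)) : M.det ≤ 1 := by
  rcases isEmpty_or_nonempty m with hm | hm
  · simp [Matrix.det_isEmpty]
  · set N : ℕ := Fintype.card m with hN
    have hN0 : 0 < N := Fintype.card_pos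
    have hdet : M.det = ∏ i, hM.1.eigenvalues i := by
      have := hM.1.det_eq_prod_eigenvalues
      simpa using this
    have hev : ∀ i ∈ Finset.univ, (0:ℝ) ≤ hM.1.eigenvalues i := fun i _ =>
      hM.eigenvalues_nonneg i
    have hw : ∑ _i : m, (1 / N : ℝ) = 1 := by
      simp [Finset.sum_const, hN]
    have amgm := Real.geom_mean_le_arith_mean_weighted Finset.univ
      (fun _ => (1 / N : ℝ)) (fun i => hM.1.eigenvalues i)
      (fun i _ => by positivity) hw hev
    have hprod : ∏ i, (hM.1.eigenvalues i) ^ (1 / N : ℝ)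
        = (∏ i, hM.1.eigenvalues i) ^ (1 / N : ℝ) := by
      rw [← Real.finset_prod_rpow _ _ hev]
    have hsum : ∑ i, (1 / N : ℝ) * hM.1.eigenvalues i ≤ 1 := by
      have : ∑ i, (1 / N : ℝ) * hM.1.eigenvalues i = (1/N : ℝ) * ∑ i, hM.1.eigenvalues i := by
        rw [Finset.mul_sum]
      rw [this, ← trace_eq_sum_eigenvalues hM.1]
      rw [div_mul_eq_mul_div, one_mul, div_le_one (by positivity)]
      simpa using h
    have key : (∏ i, hM.1.eigenvalues i) ^ (1 / N : ℝ) ≤ 1 := by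
      rw [← hprod]; exact le_trans amgm hsum
    have hpn : (0:ℝ) ≤ ∏ i, hM.1.eigenvalues i := Finset.prod_nonneg hev
    have : ((∏ i, hM.1.eigenvalues i) ^ (1 / N : ℝ)) ^ (N : ℝ) ≤ 1 := by
      apply Real.rpow_le_one (by positivity) key (by positivity)
    rw [← Real.rpow_mul hpn, one_div, inv_mul_cancel₀ (by positivity), Real.rpow_one] at this
    rw [hdet]
    exact this

end EllipsoidAux

/-- The ℏ-polar dual of a set `X ⊆ ℝⁿ`. -/
def polarDual {n : ℕ} (ℏ : ℝ) (X : Set (Fin n → ℝ)) : Set (Fin n → ℝ) :=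
  {p | ∀ x ∈ X, p ⬝ᵥ x ≤ ℏ}

/-- The closed ball `B²ⁿ(√ℏ) = {z : z·z ≤ ℏ}` of radius `√ℏ` centered at `0`. -/
def ballh (n : ℕ) (ℏ : ℝ) : Set (Fin n ⊕ Fin n → ℝ) :=
  {z | z ⬝ᵥ z ≤ ℏ}

/-- for `X = {x : Ax·x ≤ ℏ}` (`A` symmetric positive definite) and
`X^ℏ` its ℏ-polar dual, every ellipsoid `z₀ + T(B²ⁿ(√ℏ))` (with `T` an invertible
linear map of `ℝ²ⁿ`) contained in `X × X^ℏ` satisfies `|det T| ≤ 1`; hence its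
volume is at most that of `B²ⁿ(√ℏ)`. -/
theorem det_le_one_of_ellipsoid_subset_product
    {n : ℕ} (ℏ : ℝ) (hℏ : 0 < ℏ)
    (A : Matrix (Fin n) (Fin n) ℝ) (hA : A.PosDef)
    (X : Set (Fin n → ℝ)) (hX : X = {x | A.mulVec x ⬝ᵥ x ≤ ℏ})
    (Xd : Set (Fin n → ℝ)) (hXd : Xd = polarDual ℏ X)
    (T : Matrix (Fin n ⊕ Fin n) (Fin n ⊕ Fin n) ℝ) (hT : IsUnit T.det)
    (z₀ : Fin n ⊕ Fin n → ℝ)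
    (hsub : (fun w => z₀ + T.mulVec w) '' ballh n ℏ
      ⊆ {z | (z ∘ Sum.inl) ∈ X ∧ (z ∘ Sum.inr) ∈ Xd}) :
    |T.det| ≤ 1 := by
  classical
  have hAinv : (A⁻¹).PosDef := hA.inv
  set S : Matrix (Fin n) (Fin n) ℝ := hA.posSemidef.sqrt with hSdef
  set S' : Matrix (Fin n) (Fin n) ℝ := hAinv.posSemidef.sqrt with hS'def
  set T₁ : Matrix (Fin n) (Fin n ⊕ Fin n) ℝ := T.submatrix Sum.inl id with hT1
  set T₂ : Matrix (Fin n) (Fin n ⊕ Fin n) ℝ := T.submatrix Sum.inr id with hT2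
  -- Step 1 : the polar dual is contained in the dual ellipsoid
  have hXd' : ∀ p ∈ Xd, A⁻¹.mulVec p ⬝ᵥ p ≤ ℏ := by
    intro p hp
    rw [hXd] at hp
    set q : ℝ := A⁻¹.mulVec p ⬝ᵥ p with hq
    have hq0 : 0 ≤ q := by
      have := hAinv.posSemidef.dotProduct_mulVec_nonneg p
      rw [hq, dotProduct_comm]
      simpa using this
    rcases hq0.eq_or_lt with h0 | hqpos
    · rw [← h0]; exact le_of_lt hℏ
    · set c : ℝ := Real.sqrt (ℏ / q) with hc
      have hc0 : 0 ≤ c := Real.sqrt_nonneg _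
      have hc2 : c ^ 2 = ℏ / q := Real.sq_sqrt (le_of_lt (div_pos hℏ hqpos))
      have hAAinv : A * A⁻¹ = 1 :=
        mul_nonsing_inv A (isUnit_iff_ne_zero.mpr (ne_of_gt hA.det_pos))
      have hxX : (c • A⁻¹.mulVec p) ∈ X := by
        rw [hX]
        show A.mulVec (c • A⁻¹.mulVec p) ⬝ᵥ (c • A⁻¹.mulVec p) ≤ ℏ
        rw [mulVec_smul, mulVec_mulVec, hAAinv, one_mulVec, smul_dotProduct, dotProduct_smul,
          smul_eq_mul, smul_eq_mul, ← mul_assoc, ← sq, hc2, dotProduct_comm, ← hq,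
          div_mul_cancel₀ _ (ne_of_gt hqpos)]
      have hle := hp _ hxX
      rw [dotProduct_smul, smul_eq_mul, dotProduct_comm, ← hq] at hle
      have hcq : 0 ≤ c * q := mul_nonneg hc0 hq0
      have hsq : (c * q) ^ 2 = ℏ * q := by
        rw [mul_pow, hc2]
        field_simp
      nlinarith [mul_self_le_mul_self hcq hle]
  -- Step 2 : membership bounds for the translated ellipsoid
  have h1 : ∀ w : (Fin n ⊕ Fin n) → ℝ, w ⬝ᵥ w ≤ ℏ →
      A.mulVec ((z₀ ∘ Sum.inl) + T₁.mulVec w) ⬝ᵥ ((z₀ ∘ Sum.inl) + T₁.mulVec w) ≤ ℏ ∧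
      A⁻¹.mulVec ((z₀ ∘ Sum.inr) + T₂.mulVec w) ⬝ᵥ ((z₀ ∘ Sum.inr) + T₂.mulVec w) ≤ ℏ := by
    intro w hw
    have hmem := hsub (Set.mem_image_of_mem _ (show w ∈ ballh n ℏ from hw))
    obtain ⟨hx, hp⟩ := hmem
    have einl : (z₀ + T.mulVec w) ∘ Sum.inl = (z₀ ∘ Sum.inl) + T₁.mulVec w := rfl
    have einr : (z₀ + T.mulVec w) ∘ Sum.inr = (z₀ ∘ Sum.inr) + T₂.mulVec w := rfl
    constructor
    · rw [hX] at hx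
      rw [← einl]
      exact hx
    · have := hXd' _ hp
      rw [← einr]
      exact this
  -- Step 3 : parallelogram trick and scaling
  have h2 : ∀ w : (Fin n ⊕ Fin n) → ℝ, w ⬝ᵥ w ≤ ℏ →
      A.mulVec (T₁.mulVec w) ⬝ᵥ T₁.mulVec w ≤ ℏ := by
    intro w hw
    have hw' : (-w) ⬝ᵥ (-w) ≤ ℏ := by simpa using hw
    have hplus := (h1 w hw).1
    have hminus := (h1 (-w) hw').1
    have h0 : 0 ≤ A.mulVec (z₀ ∘ Sum.inl) ⬝ᵥ (z₀ ∘ Sum.inl) := by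
      have := hA.posSemidef.dotProduct_mulVec_nonneg (z₀ ∘ Sum.inl)
      simpa [dotProduct_comm] using this
    refine EllipsoidAux.quad_le_of_add_sub A (z₀ ∘ Sum.inl) (T₁.mulVec w) h0 hplus ?_
    have : (z₀ ∘ Sum.inl) - T₁.mulVec w = (z₀ ∘ Sum.inl) + T₁.mulVec (-w) := by
      rw [mulVec_neg, sub_eq_add_neg]
    rw [this]
    exact hminus
  have h2' : ∀ w : (Fin n ⊕ Fin n) → ℝ, w ⬝ᵥ w ≤ ℏ →
      A⁻¹.mulVec (T₂.mulVec w) ⬝ᵥ T₂.mulVec w ≤ ℏ := by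
    intro w hw
    have hw' : (-w) ⬝ᵥ (-w) ≤ ℏ := by simpa using hw
    have hplus := (h1 w hw).2
    have hminus := (h1 (-w) hw').2
    have h0 : 0 ≤ A⁻¹.mulVec (z₀ ∘ Sum.inr) ⬝ᵥ (z₀ ∘ Sum.inr) := by
      have := hAinv.posSemidef.dotProduct_mulVec_nonneg (z₀ ∘ Sum.inr)
      simpa [dotProduct_comm] using this
    refine EllipsoidAux.quad_le_of_add_sub A⁻¹ (z₀ ∘ Sum.inr) (T₂.mulVec w) h0 hplus ?_
    have : (z₀ ∘ Sum.inr) - T₂.mulVec w = (z₀ ∘ Sum.inr) + T₂.mulVec (-w) := by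
      rw [mulVec_neg, sub_eq_add_neg]
    rw [this]
    exact hminus
  -- Step 4 : bounds for C = S * T₁, C' = S' * T₂
  have hCbound : ∀ w, (S * T₁).mulVec w ⬝ᵥ (S * T₁).mulVec w ≤ w ⬝ᵥ w := by
    intro w
    rw [← mulVec_mulVec, EllipsoidAux.sqrt_quad hA.posSemidef]
    exact EllipsoidAux.quad_le_of_ball A T₁ hℏ h2 w
  have hC'bound : ∀ w, (S' * T₂).mulVec w ⬝ᵥ (S' * T₂).mulVec w ≤ w ⬝ᵥ w := by
    intro w
    rw [← mulVec_mulVec, EllipsoidAux.sqrt_quad hAinv.posSemidef]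
    exact EllipsoidAux.quad_le_of_ball A⁻¹ T₂ hℏ h2' w
  -- Step 5 : assemble D and M
  set D : Matrix (Fin n ⊕ Fin n) (Fin n ⊕ Fin n) ℝ := (fromBlocks S 0 0 S') * T with hD
  have hrowD : ∀ i, D i ⬝ᵥ D i ≤ 1 := by
    intro i
    cases i with
    | inl k =>
        have hrow : D (Sum.inl k) = (S * T₁) k := by
          funext j
          simp [hD, mul_apply, Fintype.sum_sum_type, hT1]
        rw [hrow]
        exact EllipsoidAux.row_dot_le_one _ hCbound k
    | inr k =>
        have hrow : D (Sum.inr k) = (S' * T₂) k := by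
          funext j
          simp [hD, mul_apply, Fintype.sum_sum_type, hT2]
        rw [hrow]
        exact EllipsoidAux.row_dot_le_one _ hC'bound k
  have hMpsd : (Dᴴ * D).PosSemidef := posSemidef_conjTranspose_mul_self D
  have htr : (Dᴴ * D).trace ≤ (Fintype.card (Fin n ⊕ Fin n) : ℝ) := by
    rw [trace_mul_comm]
    have hdiag : (D * Dᴴ).trace = ∑ i, D i ⬝ᵥ D i := by
      simp [Matrix.trace, Matrix.diag, mul_apply, conjTranspose_apply, dotProduct]
    rw [hdiag]
    calc ∑ i, D i ⬝ᵥ D i ≤ ∑ _i : Fin n ⊕ Fin n, (1:ℝ) :=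
          Finset.sum_le_sum fun i _ => hrowD i
      _ = (Fintype.card (Fin n ⊕ Fin n) : ℝ) := by simp
  have hdetM : (Dᴴ * D).det ≤ 1 := EllipsoidAux.det_le_one_of_trace_le_card hMpsd htr
  -- Step 6 : compute the determinant of M
  have hdetD : D.det = S.det * S'.det * T.det := by
    rw [hD, det_mul, det_fromBlocks_zero₂₁]
  have hSS : S.det * S.det = A.det := by
    rw [← det_mul, hA.posSemidef.sqrt_mul_self]
  have hSS' : S'.det * S'.det = (A⁻¹).det := by
    rw [← det_mul, hAinv.posSemidef.sqrt_mul_self]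
  have hAA : (A⁻¹).det * A.det = 1 :=
    det_nonsing_inv_mul_det A (isUnit_iff_ne_zero.mpr (ne_of_gt hA.det_pos))
  have hdetM2 : (Dᴴ * D).det = T.det ^ 2 := by
    rw [det_mul, det_conjTranspose, star_trivial, hdetD]
    have e : S.det * S'.det * T.det * (S.det * S'.det * T.det)
        = (S'.det * S'.det) * (S.det * S.det) * T.det ^ 2 := by ring
    rw [e, hSS, hSS', hAA, one_mul]
  have hfinal : T.det ^ 2 ≤ 1 := by rw [← hdetM2]; exact hdetM
  nlinarith [abs_nonneg T.det, sq_abs T.det]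
end
end

section
/- Let M be a real symmetric positive definite 2n×2n matrix and Ω := {z ∈ ℝ^{2n} : Mz·z ≤ ℏ}. Then Ω^{ℏ,ω} = Ω if and only if Ω is a quantum blob, i.e. if and only if there exists S ∈ Sp(n) such that Ω = S(B^{2n}(√ℏ)). -/
open Matrix Set

noncomputable section

/-- The standard symplectic matrix `J = [[0, I],[-I, 0]]` on `ℝ²ⁿ = ℝⁿ ⊕ ℝⁿ`. -/
def J (n : ℕ) : Matrix (Fin n ⊕ Fin n) (Fin n ⊕ Fin n) ℝ :=
  Matrix.fromBlocks 0 1 (-1) 0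

/-- `S ∈ Sp(n)` iff `Sᵀ J S = J`. -/
def IsSymplectic {n : ℕ} (S : Matrix (Fin n ⊕ Fin n) (Fin n ⊕ Fin n) ℝ) : Prop :=
  Sᵀ * J n * S = J n

/-- The standard symplectic form `ω(z,z') = p·x' - p'·x = (Jz)·z'`. -/
def symplForm {n : ℕ} (z z' : Fin n ⊕ Fin n → ℝ) : ℝ :=
  (J n).mulVec z ⬝ᵥ z'

/-- The symplectic ℏ-polar dual `Ω^{ℏ,ω} = {z' : ω(z,z') ≤ ℏ for all z ∈ Ω}`. -/
def symplDual {n : ℕ} (ℏ : ℝ) (Ω : Set (Fin n ⊕ Fin n → ℝ)) : Set (Fin n ⊕ Fin n → ℝ) :=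
  {z' | ∀ z ∈ Ω, symplForm z z' ≤ ℏ}

/-! ### Auxiliary lemmas -/

lemma myJ_transpose (n : ℕ) : (_root_.J n)ᵀ = -(_root_.J n) := by
  rw [_root_.J, Matrix.fromBlocks_transpose, Matrix.fromBlocks_neg]
  simp

lemma myJ_mul_J (n : ℕ) : _root_.J n * _root_.J n = -1 := by
  rw [show ((-1 : Matrix (Fin n ⊕ Fin n) (Fin n ⊕ Fin n) ℝ)) = -(Matrix.fromBlocks 1 0 0 1) by
    rw [Matrix.fromBlocks_one], Matrix.fromBlocks_neg]
  simp [_root_.J, Matrix.fromBlocks_multiply]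

lemma myJt_mul_J (n : ℕ) : (_root_.J n)ᵀ * _root_.J n = 1 := by
  rw [myJ_transpose, neg_mul, myJ_mul_J, neg_neg]

lemma myJ_mul_Jt (n : ℕ) : _root_.J n * (_root_.J n)ᵀ = 1 := by
  rw [myJ_transpose, mul_neg, myJ_mul_J, neg_neg]

lemma psd_dot {m : Type*} [Fintype m] {M : Matrix m m ℝ} (hM : M.PosSemidef) (x : m → ℝ) :
    0 ≤ M.mulVec x ⬝ᵥ x := by
  have := hM.dotProduct_mulVec_nonneg x
  simpa [dotProduct_comm] using this

lemma pd_dot {m : Type*} [Fintype m] {M : Matrix m m ℝ} (hM : M.PosDef) {x : m → ℝ}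
    (hx : x ≠ 0) : 0 < M.mulVec x ⬝ᵥ x := by
  have := hM.dotProduct_mulVec_pos hx
  simpa [dotProduct_comm] using this

lemma mulVec_dot {m : Type*} [Fintype m] (A : Matrix m m ℝ) (v w : m → ℝ) :
    A.mulVec v ⬝ᵥ w = v ⬝ᵥ Aᵀ.mulVec w := by
  rw [dotProduct_comm, Matrix.dotProduct_mulVec, Matrix.mulVec_transpose,
    dotProduct_comm]

lemma dual_quad {m : Type*} [Fintype m] [DecidableEq m] {ℏ : ℝ} (hℏ : 0 < ℏ)
    {M : Matrix m m ℝ} (hM : M.PosDef) (w : m → ℝ) :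
    (∀ z, M.mulVec z ⬝ᵥ z ≤ ℏ → w ⬝ᵥ z ≤ ℏ) ↔ M⁻¹.mulVec w ⬝ᵥ w ≤ ℏ := by
  have hMinv : M⁻¹.PosDef := hM.inv
  have hsym : Mᵀ = M := hM.isHermitian
  have hMM : M * M⁻¹ = 1 := Matrix.mul_nonsing_inv M (hM.isUnit.map (Matrix.detMonoidHom))
  have hMu : M.mulVec (M⁻¹.mulVec w) = w := by
    rw [Matrix.mulVec_mulVec, hMM, Matrix.one_mulVec]
  set u : m → ℝ := M⁻¹.mulVec w with hu
  set a : ℝ := u ⬝ᵥ w with ha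
  have ha0 : 0 ≤ a := by
    have := psd_dot hMinv.posSemidef w
    rwa [dotProduct_comm, dotProduct_comm w u] at this
  constructor
  · intro h
    rcases eq_or_lt_of_le ha0 with h0 | hapos
    · rw [← h0]; exact hℏ.le
    · set s : ℝ := Real.sqrt (ℏ / a) with hs
      have hs0 : 0 < s := Real.sqrt_pos.mpr (div_pos hℏ hapos)
      have hs2 : s ^ 2 = ℏ / a := Real.sq_sqrt (div_pos hℏ hapos).le
      have hs2' : s ^ 2 * a = ℏ := by
        rw [hs2]; field_simp
      have hz : M.mulVec (s • u) ⬝ᵥ (s • u) ≤ ℏ := by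
        rw [Matrix.mulVec_smul, hMu, smul_dotProduct, dotProduct_smul,
          dotProduct_comm w u]
        simp only [smul_eq_mul, ← ha]
        nlinarith
      have hwz := h (s • u) hz
      rw [dotProduct_smul, smul_eq_mul, dotProduct_comm w u, ← ha] at hwz
      have h1s : 1 ≤ s := by nlinarith
      nlinarith
  · intro haℏ z hz
    by_cases hw : w = 0
    · simp [hw]; exact hℏ.le
    have hapos : 0 < a := by
      have := pd_dot hMinv hw
      rwa [dotProduct_comm, dotProduct_comm w u] at this
    set b : ℝ := w ⬝ᵥ z with hb
    set t : ℝ := b / a with ht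
    have hat : t * a = b := div_mul_cancel₀ b hapos.ne'
    have hMzu : M.mulVec z ⬝ᵥ u = b := by
      rw [mulVec_dot, hsym, dotProduct_comm, hMu]
    have key : 0 ≤ (M.mulVec z ⬝ᵥ z) - 2 * t * b + t ^ 2 * a := by
      have h0 := psd_dot hM.posSemidef (z - t • u)
      have hexp : M.mulVec (z - t • u) = M.mulVec z - t • w := by
        rw [Matrix.mulVec_sub, Matrix.mulVec_smul, hMu]
      rw [hexp, sub_dotProduct, dotProduct_sub, dotProduct_sub,
        smul_dotProduct, smul_dotProduct, dotProduct_smul,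
        dotProduct_smul, hMzu] at h0
      simp only [smul_eq_mul, dotProduct_comm w u, ← ha, ← hb] at h0
      nlinarith [h0]
    have hb2 : b ^ 2 ≤ (M.mulVec z ⬝ᵥ z) * a := by nlinarith [mul_nonneg hapos.le key]
    have hca : (M.mulVec z ⬝ᵥ z) * a ≤ ℏ * ℏ :=
      mul_le_mul hz haℏ hapos.le hℏ.le
    nlinarith [sq_nonneg (b - ℏ)]

lemma quad_le_of_subset {m : Type*} [Fintype m] [DecidableEq m] {ℏ : ℝ} (hℏ : 0 < ℏ)
    {M N : Matrix m m ℝ} (hM : M.PosDef)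
    (h : {z : m → ℝ | M.mulVec z ⬝ᵥ z ≤ ℏ} ⊆ {z | N.mulVec z ⬝ᵥ z ≤ ℏ}) :
    ∀ z, N.mulVec z ⬝ᵥ z ≤ M.mulVec z ⬝ᵥ z := by
  intro z
  by_cases hz : z = 0
  · simp [hz]
  · have hapos : 0 < M.mulVec z ⬝ᵥ z := pd_dot hM hz
    set a := M.mulVec z ⬝ᵥ z with ha
    set s : ℝ := Real.sqrt (ℏ / a) with hs
    have hs2 : s ^ 2 = ℏ / a := Real.sq_sqrt (div_pos hℏ hapos).le
    have hs2' : s ^ 2 * a = ℏ := by rw [hs2]; field_simp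
    have hspos : 0 < s ^ 2 := by rw [hs2]; exact div_pos hℏ hapos
    have hmem : (s • z) ∈ {z : m → ℝ | M.mulVec z ⬝ᵥ z ≤ ℏ} := by
      simp only [Set.mem_setOf_eq, Matrix.mulVec_smul, smul_dotProduct,
        dotProduct_smul, smul_eq_mul]
      nlinarith
    have := h hmem
    simp only [Set.mem_setOf_eq, Matrix.mulVec_smul, smul_dotProduct,
      dotProduct_smul, smul_eq_mul] at this
    nlinarith

lemma eq_of_quad_eq {m : Type*} [Fintype m] [DecidableEq m]
    {M N : Matrix m m ℝ} (hMs : Mᵀ = M) (hNs : Nᵀ = N)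
    (h : ∀ z, M.mulVec z ⬝ᵥ z = N.mulVec z ⬝ᵥ z) : M = N := by
  have hbil : ∀ z w, M.mulVec z ⬝ᵥ w = N.mulVec z ⬝ᵥ w := by
    intro z w
    have h1 := h (z + w)
    have h2 := h z
    have h3 := h w
    have hMwz : M.mulVec w ⬝ᵥ z = M.mulVec z ⬝ᵥ w := by
      rw [mulVec_dot, hMs, dotProduct_comm]
    have hNwz : N.mulVec w ⬝ᵥ z = N.mulVec z ⬝ᵥ w := by
      rw [mulVec_dot, hNs, dotProduct_comm]
    rw [Matrix.mulVec_add, add_dotProduct, dotProduct_add,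
      dotProduct_add, Matrix.mulVec_add, add_dotProduct,
      dotProduct_add, dotProduct_add, hMwz, hNwz] at h1
    linarith
  ext i j
  have := hbil (Pi.single j 1) (Pi.single i 1)
  rwa [Matrix.mulVec_single_one, Matrix.mulVec_single_one, dotProduct_single_one,
    dotProduct_single_one, Matrix.col_apply, Matrix.col_apply] at this

open scoped MatrixOrder in
lemma psd_sqrt_exists {m : Type*} [Fintype m] [DecidableEq m] {M : Matrix m m ℝ}
    (hM : M.PosSemidef) : ∃ R : Matrix m m ℝ, R.PosSemidef ∧ R * R = M :=
  ⟨CFC.sqrt M, Matrix.nonneg_iff_posSemidef.mp (CFC.sqrt_nonneg M),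
    CFC.sqrt_mul_sqrt_self M hM.nonneg⟩

open scoped MatrixOrder in
lemma psd_sq_unique {m : Type*} [Fintype m] [DecidableEq m] {A B C : Matrix m m ℝ}
    (hA : A.PosSemidef) (hB : B.PosSemidef) (hAC : A ^ 2 = C) (hBC : B ^ 2 = C) : A = B := by
  have h1 : CFC.sqrt C = A := CFC.sqrt_unique (by rw [← sq, hAC]) hA.nonneg
  have h2 : CFC.sqrt C = B := CFC.sqrt_unique (by rw [← sq, hBC]) hB.nonneg
  rw [← h1, h2]

/-- the ellipsoid `Ω = {z : Mz·z ≤ ℏ}` (`M` symmetric positive definite)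
satisfies `Ω^{ℏ,ω} = Ω` if and only if `Ω` is a quantum blob `S(B²ⁿ(√ℏ))`, `S ∈ Sp(n)`. -/
theorem symplDual_eq_self_iff_quantum_blob
    {n : ℕ} (ℏ : ℝ) (hℏ : 0 < ℏ)
    (M : Matrix (Fin n ⊕ Fin n) (Fin n ⊕ Fin n) ℝ) (hM : M.PosDef)
    (Ω : Set (Fin n ⊕ Fin n → ℝ)) (hΩ : Ω = {z | M.mulVec z ⬝ᵥ z ≤ ℏ}) :
    symplDual ℏ Ω = Ω
      ↔ ∃ S : Matrix (Fin n ⊕ Fin n) (Fin n ⊕ Fin n) ℝ,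
          IsSymplectic S ∧ Ω = (fun z => S.mulVec z) '' ballh n ℏ := by
  subst hΩ
  have hsym : Mᵀ = M := hM.isHermitian
  have hMinvsym : (M⁻¹)ᵀ = M⁻¹ := by rw [Matrix.transpose_nonsing_inv, hsym]
  set N : Matrix (Fin n ⊕ Fin n) (Fin n ⊕ Fin n) ℝ := _root_.J n * M⁻¹ * (_root_.J n)ᵀ with hN
  have hNquad : ∀ z' : Fin n ⊕ Fin n → ℝ,
      N.mulVec z' ⬝ᵥ z'
        = M⁻¹.mulVec ((_root_.J n)ᵀ.mulVec z') ⬝ᵥ ((_root_.J n)ᵀ.mulVec z') := by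
    intro z'
    have h1 : N.mulVec z' = (_root_.J n).mulVec (M⁻¹.mulVec ((_root_.J n)ᵀ.mulVec z')) := by
      rw [Matrix.mulVec_mulVec, Matrix.mulVec_mulVec, ← hN]
    rw [h1, mulVec_dot]
  have hform : ∀ (z z' : Fin n ⊕ Fin n → ℝ),
      symplForm z z' = ((_root_.J n)ᵀ.mulVec z') ⬝ᵥ z := by
    intro z z'
    rw [symplForm, mulVec_dot, dotProduct_comm]
  have hdual : symplDual ℏ {z | M.mulVec z ⬝ᵥ z ≤ ℏ}
      = {z' | N.mulVec z' ⬝ᵥ z' ≤ ℏ} := by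
    ext z'
    simp only [symplDual, Set.mem_setOf_eq]
    constructor
    · intro h
      rw [hNquad]
      exact (dual_quad hℏ hM _).mp (fun z hz => by rw [← hform]; exact h z hz)
    · intro h z hz
      rw [hform]
      exact (dual_quad hℏ hM _).mpr (by rw [← hNquad]; exact h) z hz
  have hNpd : N.PosDef := by
    refine Matrix.PosDef.of_dotProduct_mulVec_pos ?_ ?_
    · show Nᵀ = N
      rw [hN, Matrix.transpose_mul, Matrix.transpose_mul, Matrix.transpose_transpose,
        hMinvsym, mul_assoc]
    · intro x hx
      have hwne : (_root_.J n)ᵀ.mulVec x ≠ 0 := by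
        intro h0
        apply hx
        have : (_root_.J n).mulVec ((_root_.J n)ᵀ.mulVec x) = x := by
          rw [Matrix.mulVec_mulVec, myJ_mul_Jt, Matrix.one_mulVec]
        rw [h0, Matrix.mulVec_zero] at this
        exact this.symm
      have := pd_dot hM.inv hwne
      have heq := hNquad x
      show 0 < star x ⬝ᵥ N.mulVec x
      rw [show star x = x from rfl, dotProduct_comm, heq]
      exact this
  constructor
  · -- forward: self-dual implies quantum blob
    intro h
    rw [hdual] at h
    have hNsym : Nᵀ = N := hNpd.isHermitian
    have hNM : N = M := by
      apply eq_of_quad_eq hNsym hsym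
      intro z
      apply le_antisymm
      · exact quad_le_of_subset hℏ hM (by rw [h]) z
      · exact quad_le_of_subset hℏ hNpd (by rw [h]) z
    -- J M Jᵀ = M⁻¹
    have hJMJ : _root_.J n * M * (_root_.J n)ᵀ = M⁻¹ := by
      have h2 : _root_.J n * N * (_root_.J n)ᵀ = _root_.J n * M * (_root_.J n)ᵀ := by
        rw [hNM]
      rw [hN] at h2
      rw [myJ_transpose, show _root_.J n * (_root_.J n * M⁻¹ * -_root_.J n) * -_root_.J n
        = (_root_.J n * _root_.J n) * M⁻¹ * (_root_.J n * _root_.J n) from by noncomm_ring,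
        myJ_mul_J] at h2
      rw [myJ_transpose, ← h2]
      noncomm_ring
    -- square root
    have hMpsd := hM.posSemidef
    obtain ⟨R, hRpsd, hRR⟩ := psd_sqrt_exists hMpsd
    have hRsym : Rᵀ = R := hRpsd.1
    have hdetR : IsUnit R.det := by
      have : R.det * R.det = M.det := by rw [← Matrix.det_mul, hRR]
      refine isUnit_iff_ne_zero.mpr fun h0 => ?_
      rw [h0, mul_zero] at this
      exact (hM.det_pos.ne' this.symm)
    have hR1r : R * R⁻¹ = 1 := Matrix.mul_nonsing_inv R hdetR
    have hR1l : R⁻¹ * R = 1 := Matrix.nonsing_inv_mul R hdetR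
    have hMinvpsd : (M⁻¹).PosSemidef := hM.inv.posSemidef
    have hKpsd : ((_root_.J n) * R * (_root_.J n)ᴴ).PosSemidef :=
      hRpsd.mul_mul_conjTranspose_same (_root_.J n)
    have hKT : ((_root_.J n) : Matrix _ _ ℝ)ᴴ = (_root_.J n)ᵀ := rfl
    rw [hKT] at hKpsd
    have hKsq : ((_root_.J n) * R * (_root_.J n)ᵀ) ^ 2 = M⁻¹ := by
      rw [pow_two, show (_root_.J n * R * (_root_.J n)ᵀ) * (_root_.J n * R * (_root_.J n)ᵀ)
        = _root_.J n * R * ((_root_.J n)ᵀ * _root_.J n) * R * (_root_.J n)ᵀ from by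
          noncomm_ring, myJt_mul_J, mul_one, show _root_.J n * R * R * (_root_.J n)ᵀ
        = _root_.J n * (R * R) * (_root_.J n)ᵀ from by noncomm_ring, hRR, hJMJ]
    have hRinvpsd : (R⁻¹).PosSemidef := hRpsd.inv
    have hRinvsq : (R⁻¹) ^ 2 = M⁻¹ := by
      rw [pow_two, ← Matrix.mul_inv_rev, hRR]
    have hKeq : (_root_.J n) * R * (_root_.J n)ᵀ = R⁻¹ := by
      exact psd_sq_unique hKpsd hRinvpsd hKsq hRinvsq
    have hJR : _root_.J n * R = R⁻¹ * _root_.J n := by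
      have := congrArg (fun X => X * _root_.J n) hKeq
      simpa only [mul_assoc, myJt_mul_J, mul_one] using this
    have hRJR : R * _root_.J n * R = _root_.J n := by
      rw [mul_assoc, hJR, ← mul_assoc, hR1r, one_mul]
    have hRinvsym : (R⁻¹)ᵀ = R⁻¹ := by rw [Matrix.transpose_nonsing_inv, hRsym]
    refine ⟨R⁻¹, ?_, ?_⟩
    · show (R⁻¹)ᵀ * _root_.J n * R⁻¹ = _root_.J n
      rw [hRinvsym]
      have : R⁻¹ * (R * _root_.J n * R) * R⁻¹ = R⁻¹ * _root_.J n * R⁻¹ := by rw [hRJR]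
      rw [show R⁻¹ * (R * _root_.J n * R) * R⁻¹
        = (R⁻¹ * R) * _root_.J n * (R * R⁻¹) from by noncomm_ring, hR1l, hR1r,
        one_mul, mul_one] at this
      rw [← this]
    · ext z
      have hquad : M.mulVec z ⬝ᵥ z = R.mulVec z ⬝ᵥ R.mulVec z := by
        rw [← hRR, ← Matrix.mulVec_mulVec, mulVec_dot, hRsym, dotProduct_comm]
      constructor
      · intro hz
        refine ⟨R.mulVec z, ?_, ?_⟩
        · show R.mulVec z ⬝ᵥ R.mulVec z ≤ ℏ
          rw [← hquad]; exact hz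
        · show R⁻¹.mulVec (R.mulVec z) = z
          rw [Matrix.mulVec_mulVec, hR1l, Matrix.one_mulVec]
      · rintro ⟨y, hy, rfl⟩
        show M.mulVec (R⁻¹.mulVec y) ⬝ᵥ (R⁻¹.mulVec y) ≤ ℏ
        rw [hquad, Matrix.mulVec_mulVec, hR1r, Matrix.one_mulVec]
        exact hy
  · -- backward: quantum blob implies self-dual
    rintro ⟨S, hSsymp, hΩS⟩
    have hSL : (-(_root_.J n) * Sᵀ * _root_.J n) * S = 1 := by
      rw [show (-(_root_.J n) * Sᵀ * _root_.J n) * S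
        = -(_root_.J n) * (Sᵀ * _root_.J n * S) from by noncomm_ring, hSsymp, neg_mul,
        myJ_mul_J, neg_neg]
    have hSinv : S⁻¹ = -(_root_.J n) * Sᵀ * _root_.J n := Matrix.inv_eq_left_inv hSL
    have hS1l : S⁻¹ * S = 1 := by rw [hSinv]; exact hSL
    have hS1r : S * S⁻¹ = 1 := mul_eq_one_comm.mp hS1l
    have hid : Sᵀ * (_root_.J n)ᵀ = -(_root_.J n * S⁻¹) := by
      rw [hSinv, myJ_transpose, show -(_root_.J n * (-(_root_.J n) * Sᵀ * _root_.J n))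
        = (_root_.J n * _root_.J n) * Sᵀ * _root_.J n from by noncomm_ring, myJ_mul_J]
      noncomm_ring
    rw [hΩS]
    ext z'
    simp only [symplDual, Set.mem_setOf_eq]
    have hmem : ∀ y : Fin n ⊕ Fin n → ℝ,
        y ∈ (fun z => S.mulVec z) '' ballh n ℏ ↔ S⁻¹.mulVec y ⬝ᵥ S⁻¹.mulVec y ≤ ℏ := by
      intro y
      constructor
      · rintro ⟨x, hx, rfl⟩
        show S⁻¹.mulVec (S.mulVec x) ⬝ᵥ S⁻¹.mulVec (S.mulVec x) ≤ ℏ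
        rwa [Matrix.mulVec_mulVec, hS1l, Matrix.one_mulVec]
      · intro hy
        exact ⟨S⁻¹.mulVec y, hy, show S.mulVec (S⁻¹.mulVec y) = y by
          rw [Matrix.mulVec_mulVec, hS1r, Matrix.one_mulVec]⟩
    have hw : ∀ y, ((_root_.J n * S)ᵀ).mulVec y = -((_root_.J n).mulVec (S⁻¹.mulVec y)) := by
      intro y
      rw [Matrix.transpose_mul, hid, Matrix.neg_mulVec, Matrix.mulVec_mulVec]
    have hJnorm : ∀ u : Fin n ⊕ Fin n → ℝ,
        (_root_.J n).mulVec u ⬝ᵥ (_root_.J n).mulVec u = u ⬝ᵥ u := by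
      intro u
      rw [mulVec_dot, Matrix.mulVec_mulVec, myJt_mul_J, Matrix.one_mulVec]
    constructor
    · intro h
      rw [hmem]
      have hkey : ∀ x, x ⬝ᵥ x ≤ ℏ → (((_root_.J n * S)ᵀ).mulVec z') ⬝ᵥ x ≤ ℏ := by
        intro x hx
        have := h (S.mulVec x) ⟨x, hx, rfl⟩
        rw [symplForm, Matrix.mulVec_mulVec, mulVec_dot, dotProduct_comm] at this
        exact this
      have h2 : (1 : Matrix (Fin n ⊕ Fin n) (Fin n ⊕ Fin n) ℝ)⁻¹.mulVec
          (((_root_.J n * S)ᵀ).mulVec z') ⬝ᵥ (((_root_.J n * S)ᵀ).mulVec z') ≤ ℏ := by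
        refine (dual_quad hℏ Matrix.PosDef.one _).mp ?_
        intro z hz
        exact hkey z (by simpa [Matrix.one_mulVec] using hz)
      rw [inv_one, Matrix.one_mulVec, hw, dotProduct_neg, neg_dotProduct,
        neg_neg, hJnorm] at h2
      exact h2
    · intro h z hz
      rw [hmem] at h
      rcases hz with ⟨x, hx, rfl⟩
      show (_root_.J n).mulVec (S.mulVec x) ⬝ᵥ z' ≤ ℏ
      rw [Matrix.mulVec_mulVec, mulVec_dot, dotProduct_comm]
      refine ((dual_quad hℏ Matrix.PosDef.one _).mpr ?_) x (by simpa [Matrix.one_mulVec, ballh] using hx)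
      rw [inv_one, Matrix.one_mulVec, hw, dotProduct_neg, neg_dotProduct,
        neg_neg, hJnorm]
      exact h
end
end
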